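/- Let n ≥ 2 and let i, j ≥ 2 be integers of the same parity (both even or both odd). Then the product of ideals M_i(A_n)·M_j(A_n) is NOT contained in M_{i+j}(A_n). -/

import Mathlib

/-- Lower central series of an associative unital algebra `R` over `K`, as `K`-submodules:
`lowerCentral K R 1 = ⊤` and, for `i ≥ 1`, `lowerCentral K R (i+1)` is the `K`-linear span of
the brackets `⁅a, l⁆ = a * l - l * a` with `a : R` and `l ∈ lowerCentral K R i`.
(By convention `lowerCentral K R 0 = ⊤` as well; only indices `i ≥ 1` are used.) -/
def lowerCentral (K : Type*) [CommRing K] (R : Type*) [Ring R] [Algebra K R] : ℕ → Submodule K R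
  | 0 => ⊤
  | 1 => ⊤
  | n + 2 => Submodule.span K
      {x : R | ∃ a : R, ∃ l ∈ lowerCentral K R (n + 1), x = a * l - l * a}

/-- `lcsIdeal K R i` is the two-sided ideal `M_i(R)` of `R` generated by `lowerCentral K R i`,
realized as the `K`-submodule spanned by all products `a * l * b` with `a b : R` and
`l ∈ lowerCentral K R i`.  Products of such ideals are taken using the multiplication of
`Submodule K R` (the span of pairwise products), which agrees with the product of
two-sided ideals. -/
def lcsIdeal (K : Type*) [CommRing K] (R : Type*) [Ring R] [Algebra K R] (i : ℕ) : Submodule K R :=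
  Submodule.span K {x : R | ∃ a b : R, ∃ l ∈ lowerCentral K R i, x = a * l * b}


open scoped TensorProduct

namespace LCSAux

variable (K : Type*) [Field K]

/-- `(d+1)×(d+1)` matrices. -/
abbrev Mat (d : ℕ) := Matrix (Fin (d+1)) (Fin (d+1)) K

/-- The shift matrix, entries `(a, a+1)` equal to 1. -/
def shiftM (d : ℕ) : Mat K d := Matrix.of fun a b => if (b:ℕ) = (a:ℕ) + 1 then 1 else 0

/-- The matrix `E_{0,k}`. -/
def cornM (d k : ℕ) : Mat K d := Matrix.of fun a b => if (a:ℕ) = 0 ∧ (b:ℕ) = k then 1 else 0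

lemma cornM_mul_shiftM (d k : ℕ) : cornM K d k * shiftM K d = cornM K d (k+1) := by
  ext a b
  simp only [cornM, shiftM, Matrix.mul_apply, Matrix.of_apply]
  rcases eq_or_ne (b:ℕ) (k+1) with hb | hb
  · have hkd : k < d + 1 := by have := b.isLt; omega
    rw [Finset.sum_eq_single (⟨k, hkd⟩ : Fin (d+1))]
    · simp [hb]
    · intro c _ hc
      have : (c : ℕ) ≠ k := fun h => hc (Fin.ext h)
      simp [this]
    · simp
  · rw [Finset.sum_eq_zero]
    · simp [hb]
    · intro c _
      rcases eq_or_ne (c:ℕ) k with hc | hc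
      · have : (b:ℕ) ≠ (c:ℕ) + 1 := by omega
        simp [this]
      · simp [hc]

lemma shiftM_mul_cornM (d k : ℕ) : shiftM K d * cornM K d k = 0 := by
  ext a b
  simp only [shiftM, cornM, Matrix.mul_apply, Matrix.of_apply, Matrix.zero_apply]
  rw [Finset.sum_eq_zero]
  intro c _
  rcases eq_or_ne (c:ℕ) 0 with hc | hc
  · have : (c:ℕ) ≠ (a:ℕ) + 1 := by omega
    simp [this]
  · simp [hc]

/-- Submodule of matrices supported on entries `(a,b)` with `a + s ≤ b`. -/
def UU (d s : ℕ) : Submodule K (Mat K d) where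
  carrier := {m | ∀ a b : Fin (d+1), (b:ℕ) < (a:ℕ) + s → m a b = 0}
  add_mem' := by
    intro x y hx hy a b h
    simp [Matrix.add_apply, hx a b h, hy a b h]
  zero_mem' := by intro a b h; simp
  smul_mem' := by
    intro c x hx a b h
    simp [Matrix.smul_apply, hx a b h]

lemma UU_mono (d : ℕ) {s t : ℕ} (h : t ≤ s) : UU K d s ≤ UU K d t := by
  intro m hm a b hb
  exact hm a b (by omega)

lemma UU_mul (d : ℕ) {s t : ℕ} {x y : Mat K d} (hx : x ∈ UU K d s) (hy : y ∈ UU K d t) :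
    x * y ∈ UU K d (s + t) := by
  intro a b hb
  rw [Matrix.mul_apply, Finset.sum_eq_zero]
  intro c _
  rcases lt_or_ge (c:ℕ) ((a:ℕ) + s) with hc | hc
  · rw [hx a c hc, zero_mul]
  · rw [hy c b (by omega), mul_zero]

lemma UU_eq_zero (d s : ℕ) {x : Mat K d} (hx : x ∈ UU K d s) (h : d + 1 ≤ s) : x = 0 := by
  ext a b
  have := b.isLt
  simpa using hx a b (by omega)

lemma one_mem_UU (d : ℕ) : (1 : Mat K d) ∈ UU K d 0 := by
  intro a b hb
  exact Matrix.one_apply_ne (fun h => by subst h; omega)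

lemma shiftM_mem_UU (d : ℕ) : shiftM K d ∈ UU K d 1 := by
  intro a b hb
  simp only [shiftM, Matrix.of_apply]
  have : (b:ℕ) ≠ (a:ℕ) + 1 := by omega
  simp [this]

lemma cornM_mem_UU (d k : ℕ) : cornM K d k ∈ UU K d k := by
  intro a b hb
  simp only [cornM, Matrix.of_apply]
  rcases eq_or_ne (a:ℕ) 0 with ha | ha
  · have : (b:ℕ) ≠ k := by omega
    simp [this]
  · simp [ha]

end LCSAux

namespace LCSAux

variable (K : Type*) [Field K] (i j : ℕ)

/-- Target algebra: tensor product of matrix algebras. -/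
abbrev BB := Mat K i ⊗[K] Mat K j

/-- Generating set for the filtration submodule `MM k`. -/
def setM (k : ℕ) : Set (BB K i j) :=
  {z | ∃ p ∈ UU K i k, z = p ⊗ₜ[K] (1 : Mat K j)} ∪
  {z | ∃ q ∈ UU K j k, z = (1 : Mat K i) ⊗ₜ[K] q} ∪
  {z | ∃ s t : ℕ, s + t = k + 1 ∧ ∃ p ∈ UU K i s, ∃ q ∈ UU K j t, z = p ⊗ₜ[K] q}

/-- The filtration submodule. -/
def MM (k : ℕ) : Submodule K (BB K i j) := Submodule.span K (setM K i j k)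

/-- The subalgebra-submodule containing the image of `Ψ`. -/
def TT : Submodule K (BB K i j) := Submodule.span K (insert 1 (setM K i j 1))

lemma memA {k s : ℕ} (hks : k ≤ s) {p : Mat K i} (hp : p ∈ UU K i s) :
    p ⊗ₜ[K] (1 : Mat K j) ∈ MM K i j k :=
  Submodule.subset_span (Or.inl (Or.inl ⟨p, UU_mono K i hks hp, rfl⟩))

lemma memB {k s : ℕ} (hks : k ≤ s) {q : Mat K j} (hq : q ∈ UU K j s) :
    (1 : Mat K i) ⊗ₜ[K] q ∈ MM K i j k :=
  Submodule.subset_span (Or.inl (Or.inr ⟨q, UU_mono K j hks hq, rfl⟩))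

lemma memC {k s t : ℕ} (hst : k + 1 ≤ s + t) {p : Mat K i} {q : Mat K j}
    (hp : p ∈ UU K i s) (hq : q ∈ UU K j t) : p ⊗ₜ[K] q ∈ MM K i j k := by
  rcases le_or_gt (k+1) s with hs | hs
  · exact Submodule.subset_span (Or.inr ⟨k+1, 0, by omega, p, UU_mono K i hs hp, q,
      UU_mono K j (Nat.zero_le t) hq, rfl⟩)
  · exact Submodule.subset_span (Or.inr ⟨s, k+1-s, by omega, p, hp, q,
      UU_mono K j (by omega) hq, rfl⟩)

lemma MM_le_TT : MM K i j 1 ≤ TT K i j :=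
  Submodule.span_mono (Set.subset_insert _ _)

/-- The key bracket lemma: `[TT, MM k] ⊆ MM (k+1)`. -/
lemma brk_mem (k : ℕ) : ∀ a ∈ TT K i j, ∀ z ∈ MM K i j k, a * z - z * a ∈ MM K i j (k+1) := by
  intro a ha
  induction ha using Submodule.span_induction with
  | zero => intro z hz; simp only [zero_mul, mul_zero, sub_zero]; exact Submodule.zero_mem _
  | add x y hx hy hx' hy' =>
      intro z hz
      have h := Submodule.add_mem _ (hx' z hz) (hy' z hz)
      have e : (x + y) * z - z * (x + y) = (x * z - z * x) + (y * z - z * y) := by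
        rw [add_mul, mul_add]; abel
      rw [e]; exact h
  | smul c x hx hx' =>
      intro z hz
      have h := Submodule.smul_mem _ c (hx' z hz)
      have e : (c • x) * z - z * (c • x) = c • (x * z - z * x) := by
        rw [smul_mul_assoc, mul_smul_comm, smul_sub]
      rw [e]; exact h
  | mem x hx =>
      rcases hx with rfl | hx
      · intro z hz; simp only [one_mul, mul_one, sub_self]; exact Submodule.zero_mem _
      intro z hz
      induction hz using Submodule.span_induction with
      | zero => simp only [zero_mul, mul_zero, sub_zero, sub_self]; exact Submodule.zero_mem _
      | add z w hz hw hz' hw' =>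
          have h := Submodule.add_mem _ hz' hw'
          have e : x * (z + w) - (z + w) * x = (x * z - z * x) + (x * w - w * x) := by
            rw [add_mul, mul_add]; abel
          rw [e]; exact h
      | smul c z hz hz' =>
          have h := Submodule.smul_mem _ c hz'
          have e : x * (c • z) - (c • z) * x = c • (x * z - z * x) := by
            rw [smul_mul_assoc, mul_smul_comm, smul_sub]
          rw [e]; exact h
      | mem z hzset =>
          rcases hx with (⟨p, hp, rfl⟩ | ⟨q, hq, rfl⟩) | ⟨s, t, hst, p, hp, q, hq, rfl⟩ <;>
            rcases hzset with (⟨p', hp', rfl⟩ | ⟨q', hq', rfl⟩) | ⟨s', t', hst', p', hp', q', hq', rfl⟩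
          -- case A1 · Ak
          · rw [Algebra.TensorProduct.tmul_mul_tmul, Algebra.TensorProduct.tmul_mul_tmul,
              one_mul, ← TensorProduct.sub_tmul]
            exact memA K i j le_rfl (Submodule.sub_mem _
              (UU_mono K i (by omega) (UU_mul K i hp hp'))
              (UU_mono K i (by omega) (UU_mul K i hp' hp)))
          -- case A1 · Bk : commute
          · rw [Algebra.TensorProduct.tmul_mul_tmul, Algebra.TensorProduct.tmul_mul_tmul,
              one_mul, mul_one, one_mul, mul_one, sub_self]
            exact Submodule.zero_mem _
          -- case A1 · Ck
          · rw [Algebra.TensorProduct.tmul_mul_tmul, Algebra.TensorProduct.tmul_mul_tmul,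
              one_mul, mul_one]
            exact Submodule.sub_mem _
              (memC K i j (by omega) (UU_mul K i hp hp') hq')
              (memC K i j (by omega) (UU_mul K i hp' hp) hq')
          -- case B1 · Ak : commute
          · rw [Algebra.TensorProduct.tmul_mul_tmul, Algebra.TensorProduct.tmul_mul_tmul,
              one_mul, mul_one, one_mul, mul_one, sub_self]
            exact Submodule.zero_mem _
          -- case B1 · Bk
          · rw [Algebra.TensorProduct.tmul_mul_tmul, Algebra.TensorProduct.tmul_mul_tmul,
              one_mul, ← TensorProduct.tmul_sub]
            exact memB K i j le_rfl (Submodule.sub_mem _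
              (UU_mono K j (by omega) (UU_mul K j hq hq'))
              (UU_mono K j (by omega) (UU_mul K j hq' hq)))
          -- case B1 · Ck
          · rw [Algebra.TensorProduct.tmul_mul_tmul, Algebra.TensorProduct.tmul_mul_tmul,
              one_mul, mul_one]
            exact Submodule.sub_mem _
              (memC K i j (by omega) hp' (UU_mul K j hq hq'))
              (memC K i j (by omega) hp' (UU_mul K j hq' hq))
          -- case C1 · Ak
          · rw [Algebra.TensorProduct.tmul_mul_tmul, Algebra.TensorProduct.tmul_mul_tmul,
              one_mul, mul_one]
            exact Submodule.sub_mem _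
              (memC K i j (by omega) (UU_mul K i hp hp') hq)
              (memC K i j (by omega) (UU_mul K i hp' hp) hq)
          -- case C1 · Bk
          · rw [Algebra.TensorProduct.tmul_mul_tmul, Algebra.TensorProduct.tmul_mul_tmul,
              one_mul, mul_one]
            exact Submodule.sub_mem _
              (memC K i j (by omega) hp (UU_mul K j hq hq'))
              (memC K i j (by omega) hp (UU_mul K j hq' hq))
          -- case C1 · Ck
          · rw [Algebra.TensorProduct.tmul_mul_tmul, Algebra.TensorProduct.tmul_mul_tmul]
            exact Submodule.sub_mem _
              (memC K i j (by omega) (UU_mul K i hp hp') (UU_mul K j hq hq'))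
              (memC K i j (by omega) (UU_mul K i hp' hp) (UU_mul K j hq' hq))

end LCSAux


namespace LCSAux

variable (K : Type*) [Field K] (i j : ℕ)

lemma TT_one : (1 : BB K i j) ∈ TT K i j :=
  Submodule.subset_span (Set.mem_insert _ _)

lemma TT_mul : ∀ a ∈ TT K i j, ∀ b ∈ TT K i j, a * b ∈ TT K i j := by
  intro a ha
  induction ha using Submodule.span_induction with
  | zero => intro b hb; rw [zero_mul]; exact Submodule.zero_mem _
  | add x y hx hy hx' hy' =>
      intro b hb; rw [add_mul]; exact Submodule.add_mem _ (hx' b hb) (hy' b hb)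
  | smul c x hx hx' =>
      intro b hb; rw [smul_mul_assoc]; exact Submodule.smul_mem _ c (hx' b hb)
  | mem x hx =>
      rcases hx with rfl | hx
      · intro b hb; rw [one_mul]; exact hb
      intro b hb
      induction hb using Submodule.span_induction with
      | zero => rw [mul_zero]; exact Submodule.zero_mem _
      | add z w hz hw hz' hw' => rw [mul_add]; exact Submodule.add_mem _ hz' hw'
      | smul c z hz hz' => rw [mul_smul_comm]; exact Submodule.smul_mem _ c hz'
      | mem z hzset =>
          rcases hzset with rfl | hzset
          · rw [mul_one]; exact Submodule.subset_span (Set.mem_insert_iff.2 (Or.inr hx))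
          rcases hx with (⟨p, hp, rfl⟩ | ⟨q, hq, rfl⟩) | ⟨s, t, hst, p, hp, q, hq, rfl⟩ <;>
            rcases hzset with (⟨p', hp', rfl⟩ | ⟨q', hq', rfl⟩) | ⟨s', t', hst', p', hp', q', hq', rfl⟩ <;>
            rw [Algebra.TensorProduct.tmul_mul_tmul] <;>
            try simp only [one_mul, mul_one]
          all_goals refine MM_le_TT K i j ?_
          · exact memA K i j (le_refl 1) (UU_mono K i (by omega) (UU_mul K i hp hp'))
          · exact memC K i j (by omega) hp hq'
          · exact memC K i j (by omega) (UU_mul K i hp hp') hq'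
          · exact memC K i j (by omega) hp' hq
          · exact memB K i j (le_refl 1) (UU_mono K j (by omega) (UU_mul K j hq hq'))
          · exact memC K i j (by omega) hp' (UU_mul K j hq hq')
          · exact memC K i j (by omega) (UU_mul K i hp hp') hq
          · exact memC K i j (by omega) hp (UU_mul K j hq hq')
          · exact memC K i j (by omega) (UU_mul K i hp hp') (UU_mul K j hq hq')

variable (n : ℕ)

/-- Images of the generators. -/
noncomputable def Gen : Fin n → BB K i j := fun t =>
  if (t : ℕ) = 0 then cornM K i 1 ⊗ₜ[K] 1 + 1 ⊗ₜ[K] cornM K j 1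
  else if (t : ℕ) = 1 then shiftM K i ⊗ₜ[K] 1 + 1 ⊗ₜ[K] shiftM K j
  else 0

/-- The detecting algebra homomorphism. -/
noncomputable def Psi : FreeAlgebra K (Fin n) →ₐ[K] BB K i j := FreeAlgebra.lift K (Gen K i j n)

lemma Gen_mem_TT (t : Fin n) : Gen K i j n t ∈ TT K i j := by
  unfold Gen
  split
  · exact Submodule.add_mem _
      (MM_le_TT K i j (memA K i j (le_refl 1) (cornM_mem_UU K i 1)))
      (MM_le_TT K i j (memB K i j (le_refl 1) (cornM_mem_UU K j 1)))
  split
  · exact Submodule.add_mem _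
      (MM_le_TT K i j (memA K i j (le_refl 1) (shiftM_mem_UU K i)))
      (MM_le_TT K i j (memB K i j (le_refl 1) (shiftM_mem_UU K j)))
  · exact Submodule.zero_mem _

lemma Psi_mem_TT (v : FreeAlgebra K (Fin n)) : Psi K i j n v ∈ TT K i j := by
  induction v using FreeAlgebra.induction with
  | grade0 r =>
      rw [AlgHom.commutes, Algebra.algebraMap_eq_smul_one]
      exact Submodule.smul_mem _ r (TT_one K i j)
  | grade1 t =>
      rw [show Psi K i j n (FreeAlgebra.ι K t) = Gen K i j n t from FreeAlgebra.lift_ι_apply _ _]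
      exact Gen_mem_TT K i j n t
  | mul a b ha hb => rw [map_mul]; exact TT_mul K i j _ ha _ hb
  | add a b ha hb => rw [map_add]; exact Submodule.add_mem _ ha hb

end LCSAux
namespace LCSAux

variable (K : Type*) [Field K] (i j n : ℕ)

lemma brkTT : ∀ a ∈ TT K i j, ∀ b ∈ TT K i j, a * b - b * a ∈ MM K i j 2 := by
  intro a ha b hb
  induction hb using Submodule.span_induction with
  | zero => simp only [mul_zero, zero_mul, sub_zero]; exact Submodule.zero_mem _
  | add z w hz hw hz' hw' =>
      have e : a * (z + w) - (z + w) * a = (a * z - z * a) + (a * w - w * a) := by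
        rw [mul_add, add_mul]; abel
      rw [e]; exact Submodule.add_mem _ hz' hw'
  | smul c z hz hz' =>
      have e : a * (c • z) - (c • z) * a = c • (a * z - z * a) := by
        rw [smul_mul_assoc, mul_smul_comm, smul_sub]
      rw [e]; exact Submodule.smul_mem _ c hz'
  | mem z hzset =>
      rcases hzset with rfl | hzset
      · simp only [mul_one, one_mul, sub_self]; exact Submodule.zero_mem _
      · exact brk_mem K i j 1 a ha z (Submodule.subset_span hzset)

lemma L_maps : ∀ k : ℕ, ∀ l ∈ lowerCentral K (FreeAlgebra K (Fin n)) (k+2),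
    Psi K i j n l ∈ MM K i j (k+2) := by
  intro k
  induction k with
  | zero =>
      intro l hl
      have h2 : lowerCentral K (FreeAlgebra K (Fin n)) 2 = Submodule.span K
          {x | ∃ a : FreeAlgebra K (Fin n),
            ∃ l' ∈ lowerCentral K (FreeAlgebra K (Fin n)) 1, x = a * l' - l' * a} := rfl
      rw [h2] at hl
      induction hl using Submodule.span_induction with
      | mem x hx =>
          obtain ⟨a, l', -, rfl⟩ := hx
          rw [map_sub, map_mul, map_mul]
          exact brkTT K i j _ (Psi_mem_TT K i j n a) _ (Psi_mem_TT K i j n l')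
      | zero => rw [map_zero]; exact Submodule.zero_mem _
      | add x y hx hy hx' hy' => rw [map_add]; exact Submodule.add_mem _ hx' hy'
      | smul c x hx hx' => rw [map_smul]; exact Submodule.smul_mem _ c hx'
  | succ k ih =>
      intro l hl
      have h2 : lowerCentral K (FreeAlgebra K (Fin n)) (k+3) = Submodule.span K
          {x | ∃ a : FreeAlgebra K (Fin n),
            ∃ l' ∈ lowerCentral K (FreeAlgebra K (Fin n)) (k+2), x = a * l' - l' * a} := rfl
      rw [h2] at hl
      induction hl using Submodule.span_induction with
      | mem x hx =>
          obtain ⟨a, l', hl', rfl⟩ := hx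
          rw [map_sub, map_mul, map_mul]
          exact brk_mem K i j (k+2) _ (Psi_mem_TT K i j n a) _ (ih l' hl')
      | zero => rw [map_zero]; exact Submodule.zero_mem _
      | add x y hx hy hx' hy' => rw [map_add]; exact Submodule.add_mem _ hx' hy'
      | smul c x hx hx' => rw [map_smul]; exact Submodule.smul_mem _ c hx'

lemma MM_vanish (hi : 1 ≤ i) (hj : 1 ≤ j) : MM K i j (i+j) ≤ ⊥ := by
  rw [MM, Submodule.span_le]
  rintro z ((⟨p, hp, rfl⟩ | ⟨q, hq, rfl⟩) | ⟨s, t, hst, p, hp, q, hq, rfl⟩)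
  · have hp0 : p = 0 := UU_eq_zero K i (i+j) hp (by omega)
    simp [hp0]
  · have hq0 : q = 0 := UU_eq_zero K j (i+j) hq (by omega)
    simp [hq0]
  · rcases le_or_gt (i+1) s with hs | hs
    · have hp0 : p = 0 := UU_eq_zero K i s hp hs
      simp [hp0]
    · have hq0 : q = 0 := UU_eq_zero K j t hq (by omega)
      simp [hq0]

lemma Psi_kills (hi : 1 ≤ i) (hj : 1 ≤ j) :
    ∀ v ∈ lcsIdeal K (FreeAlgebra K (Fin n)) (i+j), Psi K i j n v = 0 := by
  intro v hv
  rw [lcsIdeal] at hv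
  induction hv using Submodule.span_induction with
  | mem x hx =>
      obtain ⟨a, b, l, hl, rfl⟩ := hx
      obtain ⟨k, hk⟩ : ∃ k, i + j = k + 2 := ⟨i + j - 2, by omega⟩
      rw [hk] at hl
      have h1 : Psi K i j n l ∈ MM K i j (i+j) := hk ▸ L_maps K i j n k l hl
      have h2 : Psi K i j n l = 0 := (Submodule.mem_bot K).1 (MM_vanish K i j hi hj h1)
      rw [map_mul, map_mul, h2, mul_zero, zero_mul]
  | zero => rw [map_zero]
  | add x y hx hy hx' hy' => rw [map_add, hx', hy', add_zero]
  | smul c x hx hx' => rw [map_smul, hx', smul_zero]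

/-- The witness iterated commutators `[x, y, y, …, y]` (up to sign). -/
noncomputable def vv (x y : FreeAlgebra K (Fin n)) : ℕ → FreeAlgebra K (Fin n)
  | 0 => x
  | (k+1) => vv x y k * y - y * vv x y k

lemma vv_mem (x y : FreeAlgebra K (Fin n)) :
    ∀ k, vv K n x y k ∈ lowerCentral K (FreeAlgebra K (Fin n)) (k+1) := by
  intro k
  induction k with
  | zero => exact Submodule.mem_top
  | succ k ih =>
      have h2 : lowerCentral K (FreeAlgebra K (Fin n)) (k+2) = Submodule.span K
          {z | ∃ a : FreeAlgebra K (Fin n),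
            ∃ l ∈ lowerCentral K (FreeAlgebra K (Fin n)) (k+1), z = a * l - l * a} := rfl
      rw [h2]
      refine Submodule.subset_span ⟨-y, vv K n x y k, ih, ?_⟩
      show vv K n x y k * y - y * vv K n x y k = _
      noncomm_ring

lemma Psi_vv (h0 : 0 < n) (h1 : 1 < n) :
    ∀ k, Psi K i j n (vv K n (FreeAlgebra.ι K ⟨0, h0⟩) (FreeAlgebra.ι K ⟨1, h1⟩) k)
      = cornM K i (k+1) ⊗ₜ[K] 1 + 1 ⊗ₜ[K] cornM K j (k+1) := by
  intro k
  have hPy : Psi K i j n (FreeAlgebra.ι K ⟨1, h1⟩)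
      = shiftM K i ⊗ₜ[K] 1 + 1 ⊗ₜ[K] shiftM K j := by
    rw [Psi, FreeAlgebra.lift_ι_apply]
    simp [Gen]
  induction k with
  | zero =>
      rw [show vv K n (FreeAlgebra.ι K ⟨0, h0⟩) (FreeAlgebra.ι K ⟨1, h1⟩) 0
        = FreeAlgebra.ι K ⟨0, h0⟩ from rfl, Psi, FreeAlgebra.lift_ι_apply]
      simp [Gen]
  | succ k ih =>
      rw [show vv K n (FreeAlgebra.ι K ⟨0, h0⟩) (FreeAlgebra.ι K ⟨1, h1⟩) (k+1)
        = vv K n (FreeAlgebra.ι K ⟨0, h0⟩) (FreeAlgebra.ι K ⟨1, h1⟩) k * FreeAlgebra.ι K ⟨1, h1⟩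
          - FreeAlgebra.ι K ⟨1, h1⟩ * vv K n (FreeAlgebra.ι K ⟨0, h0⟩) (FreeAlgebra.ι K ⟨1, h1⟩) k
          from rfl]
      rw [map_sub, map_mul, map_mul, ih, hPy]
      simp only [mul_add, add_mul, Algebra.TensorProduct.tmul_mul_tmul, one_mul, mul_one,
        cornM_mul_shiftM, shiftM_mul_cornM, TensorProduct.zero_tmul, TensorProduct.tmul_zero]
      abel

/-- The corner-entry functional. -/
noncomputable def ee (d : ℕ) : Mat K d →ₗ[K] K where
  toFun M := M 0 (Fin.last d)
  map_add' M N := rfl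
  map_smul' c M := rfl

lemma ee_corn (d k : ℕ) : ee K d (cornM K d k) = if d = k then 1 else 0 := by
  show cornM K d k 0 (Fin.last d) = _
  simp only [cornM, Matrix.of_apply]
  simp [Fin.val_last, eq_comm]

lemma ee_one (d : ℕ) (hd : 1 ≤ d) : ee K d (1 : Mat K d) = 0 := by
  simp only [ee, LinearMap.coe_mk, AddHom.coe_mk]
  refine Matrix.one_apply_ne ?_
  intro h
  have : (0 : ℕ) = d := by
    have := congrArg Fin.val h
    simpa [Fin.val_last] using this
  omega

/-- The final detecting linear functional on the tensor product. -/
noncomputable def phi : BB K i j →ₗ[K] K :=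
  TensorProduct.lift (LinearMap.mk₂ K (fun M N => ee K i M * ee K j N)
    (fun M M' N => by simp [add_mul])
    (fun c M N => by simp [smul_mul_assoc]; ring)
    (fun M N N' => by simp [mul_add])
    (fun c M N => by simp [mul_smul_comm]; ring))

lemma phi_tmul (p : Mat K i) (q : Mat K j) :
    phi K i j (p ⊗ₜ[K] q) = ee K i p * ee K j q := by
  simp [phi]

end LCSAux

/-- Theorem 5.1, same parity: for `n ≥ 2` and `i, j ≥ 2` of the same parity,
`M_i(A_n) · M_j(A_n)` is not contained in `M_{i+j}(A_n)`. -/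
theorem not_contained_same_parity
    (K : Type*) [Field K] [CharZero K]
    (n : ℕ) (hn : 2 ≤ n) (i j : ℕ) (hi : 2 ≤ i) (hj : 2 ≤ j)
    (hpar : i % 2 = j % 2) :
    ¬ lcsIdeal K (FreeAlgebra K (Fin n)) i * lcsIdeal K (FreeAlgebra K (Fin n)) j ≤
        lcsIdeal K (FreeAlgebra K (Fin n)) (i + j) := by
  intro hcon
  have h0 : 0 < n := by omega
  have h1 : 1 < n := by omega
  have hvi : LCSAux.vv K n (FreeAlgebra.ι K ⟨0, h0⟩) (FreeAlgebra.ι K ⟨1, h1⟩) (i-1)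
      ∈ lowerCentral K (FreeAlgebra K (Fin n)) i := by
    have h := LCSAux.vv_mem K n (FreeAlgebra.ι K ⟨0, h0⟩) (FreeAlgebra.ι K ⟨1, h1⟩) (i-1)
    rwa [show i - 1 + 1 = i by omega] at h
  have hvj : LCSAux.vv K n (FreeAlgebra.ι K ⟨0, h0⟩) (FreeAlgebra.ι K ⟨1, h1⟩) (j-1)
      ∈ lowerCentral K (FreeAlgebra K (Fin n)) j := by
    have h := LCSAux.vv_mem K n (FreeAlgebra.ι K ⟨0, h0⟩) (FreeAlgebra.ι K ⟨1, h1⟩) (j-1)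
    rwa [show j - 1 + 1 = j by omega] at h
  have hmi : LCSAux.vv K n (FreeAlgebra.ι K ⟨0, h0⟩) (FreeAlgebra.ι K ⟨1, h1⟩) (i-1)
      ∈ lcsIdeal K (FreeAlgebra K (Fin n)) i :=
    Submodule.subset_span ⟨1, 1, _, hvi, by rw [one_mul, mul_one]⟩
  have hmj : LCSAux.vv K n (FreeAlgebra.ι K ⟨0, h0⟩) (FreeAlgebra.ι K ⟨1, h1⟩) (j-1)
      ∈ lcsIdeal K (FreeAlgebra K (Fin n)) j :=
    Submodule.subset_span ⟨1, 1, _, hvj, by rw [one_mul, mul_one]⟩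
  have hw := hcon (Submodule.mul_mem_mul hmi hmj)
  have hz := LCSAux.Psi_kills K i j n (by omega) (by omega) _ hw
  rw [map_mul, LCSAux.Psi_vv K i j n h0 h1 (i-1), LCSAux.Psi_vv K i j n h0 h1 (j-1),
    show i - 1 + 1 = i by omega, show j - 1 + 1 = j by omega] at hz
  have hphi := congrArg (LCSAux.phi K i j) hz
  rw [map_zero, mul_add, add_mul, add_mul] at hphi
  rw [Algebra.TensorProduct.tmul_mul_tmul, Algebra.TensorProduct.tmul_mul_tmul,
    Algebra.TensorProduct.tmul_mul_tmul, Algebra.TensorProduct.tmul_mul_tmul,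
    one_mul, mul_one, one_mul, mul_one] at hphi
  rw [map_add, map_add, map_add, LCSAux.phi_tmul, LCSAux.phi_tmul, LCSAux.phi_tmul,
    LCSAux.phi_tmul] at hphi
  simp only [one_mul, mul_one] at hphi
  rw [LCSAux.ee_one K i (by omega), LCSAux.ee_one K j (by omega),
    LCSAux.ee_corn K i i, LCSAux.ee_corn K j j, LCSAux.ee_corn K i j,
    LCSAux.ee_corn K j i] at hphi
  rcases eq_or_ne i j with hij | hij
  · rw [if_pos rfl, if_pos rfl, if_pos hij, if_pos hij.symm] at hphi
    norm_num at hphi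
  · rw [if_pos rfl, if_pos rfl, if_neg hij, if_neg (Ne.symm hij)] at hphi
    norm_num at hphi
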